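/- Proposition 4.3 (continuity of the labeling). Fix a real number σ > 1 and a natural number m with 0 ≤ m ≤ (σ−1)/2. Let H be a complex Hilbert space with a Hilbert basis (ψ_k)_{k∈ℕ}, and for z ∈ D let |z,σ,m⟩ = 𝒩_{σ,m}(z)^{−1/2} · ∑_{k=0}^∞ Φ_k^{σ,m}(z) ψ_k ∈ H, where 𝒩_{σ,m}(z) = (σ−2m−1)/(π(1−|z|²)^σ). Then the map z ↦ |z,σ,m⟩ is continuous from D (with the subspace topology of ℂ) to H (with the norm topology); equivalently, for all z, w ∈ D, the norm ‖ |z,σ,m⟩ − |w,σ,m⟩ ‖_H tends to 0 as z → w. -/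

import Mathlib

open MeasureTheory

/-- Rising factorial (Pochhammer symbol) `(a)_j = ∏_{i=0}^{j-1} (a + i)`. -/
noncomputable def risingFactorial (a : ℝ) (j : ℕ) : ℝ :=
  ∏ i ∈ Finset.range j, (a + i)

/-- Jacobi polynomial `P_n^{(a,b)}(x)`. -/
noncomputable def jacobiP (n : ℕ) (a b x : ℝ) : ℝ :=
  (1 / (n.factorial : ℝ)) *
    ∑ s ∈ Finset.range (n + 1),
      (n.choose s : ℝ) * risingFactorial (a + s + 1) (n - s) *
        risingFactorial ((n : ℝ) + a + b + 1) s * ((x - 1) / 2) ^ s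

/-- The basis functions `Φ_k^{σ,m}(z)` of the generalized Bergman space. -/
noncomputable def Phi (σ : ℝ) (m k : ℕ) (z : ℂ) : ℂ :=
  (Real.sqrt ((σ - 2 * m - 1) * k.factorial * Real.Gamma (σ - m) /
      (Real.pi * m.factorial * Real.Gamma (σ - 2 * m + k))) : ℂ) *
    (-1) ^ k *
    ((((1 - ‖z‖ ^ 2) ^ (-(m : ℤ)) : ℝ)) : ℂ) *
    (starRingEnd ℂ z) ^ ((m : ℤ) - (k : ℤ)) *
    ((jacobiP k ((m : ℝ) - (k : ℝ)) (σ - 2 * m - 1) (1 - 2 * ‖z‖ ^ 2) : ℝ) : ℂ)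

/-- The normalization factor `𝒩_{σ,m}(z) = (σ−2m−1)/(π(1−|z|²)^σ)`. -/
noncomputable def normFactor (σ : ℝ) (m : ℕ) (z : ℂ) : ℝ :=
  (σ - 2 * m - 1) / (Real.pi * (1 - ‖z‖ ^ 2) ^ σ)

/-- The generalized negative binomial state
`|z,σ,m⟩ = 𝒩_{σ,m}(z)^{−1/2} ∑_{k} Φ_k^{σ,m}(z) ψ_k`. -/
noncomputable def gnbs {H : Type*} [NormedAddCommGroup H] [InnerProductSpace ℂ H]
    (ψ : HilbertBasis ℕ ℂ H) (σ : ℝ) (m : ℕ) (z : ℂ) : H :=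
  (Real.sqrt (normFactor σ m z))⁻¹ • ∑' k : ℕ, Phi σ m k z • (ψ k : H)

lemma rf_succ (a : ℝ) (k : ℕ) : risingFactorial a (k+1) = risingFactorial a k * (a + k) := by
  simp [risingFactorial, Finset.prod_range_succ]

lemma rf_pos {a : ℝ} (ha : 0 < a) (k : ℕ) : 0 < risingFactorial a k :=
  Finset.prod_pos fun i _ => by positivity

lemma rf_nonneg {a : ℝ} (ha : 0 ≤ a) (k : ℕ) : 0 ≤ risingFactorial a k :=
  Finset.prod_nonneg fun i _ => by positivity

lemma rf_le_rf {a b : ℝ} (ha : 0 ≤ a) (hab : a ≤ b) (k : ℕ) :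
    risingFactorial a k ≤ risingFactorial b k :=
  Finset.prod_le_prod (fun i _ => by positivity) (fun i _ => by linarith)

lemma rf_one (k : ℕ) : risingFactorial 1 k = k.factorial := by
  rw [risingFactorial, ← Finset.prod_range_add_one_eq_factorial k]
  push_cast
  exact Finset.prod_congr rfl fun i _ => by ring

lemma Gamma_add_nat {x : ℝ} (hx : 0 < x) (k : ℕ) :
    Real.Gamma (x + k) = risingFactorial x k * Real.Gamma x := by
  induction k with
  | zero => simp [risingFactorial]
  | succ n ih =>
    have h : x + (n+1 : ℕ) = (x + n) + 1 := by push_cast; ring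
    rw [h, Real.Gamma_add_one (by positivity), ih, rf_succ]; ring

lemma nat_key (s N : ℕ) : (s+1)^N * (s+1+N) ≤ (s+1) * (s+2)^N := by
  induction N with
  | zero => simp
  | succ N ih =>
    have h2 : (s+1)^(N+1) * (s+1+(N+1)) = (s+1) * ((s+1)^N * (s+1+N)) + (s+1)^(N+1) := by ring
    calc (s+1)^(N+1) * (s+1+(N+1)) = (s+1) * ((s+1)^N * (s+1+N)) + (s+1)^(N+1) := h2
    _ ≤ (s+1) * ((s+1) * (s+2)^N) + (s+1) * (s+2)^N := by
        have hb : (s+1)^(N+1) ≤ (s+1) * (s+2)^N := by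
          calc (s+1)^(N+1) = (s+1) * (s+1)^N := by ring
            _ ≤ (s+1) * (s+2)^N := by gcongr <;> omega
        exact Nat.add_le_add (Nat.mul_le_mul_left _ ih) hb
    _ = (s+1) * ((s+1) * (s+2)^N + (s+2)^N) := by ring
    _ ≤ (s+1) * (s+2)^(N+1) := by
        apply Nat.mul_le_mul_left
        exact le_of_eq (by ring)


lemma rf_sigma_bound {c : ℝ} (hc : 1 ≤ c) {N : ℕ} (hN : c ≤ N + 1) (s : ℕ) :
    risingFactorial c s ≤ s.factorial * (s+1)^N := by
  induction s with
  | zero => simp [risingFactorial]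
  | succ s ih =>
    rw [rf_succ]
    have h1 : (0:ℝ) ≤ c + s := by linarith [Nat.cast_nonneg (α := ℝ) s]
    have h2 : c + s ≤ (s+1+N : ℕ) := by push_cast; linarith
    calc risingFactorial c s * (c + s) ≤ (s.factorial * (s+1)^N) * (s+1+N : ℕ) := by
          apply mul_le_mul ih h2 h1
          positivity
      _ ≤ ((s+1).factorial * (s+2)^N : ℕ) := by
          push_cast [Nat.factorial_succ]
          have := nat_key s N
          have : ((s+1)^N * (s+1+N) : ℝ) ≤ ((s+1) * (s+2)^N : ℝ) := by exact_mod_cast this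
          nlinarith [Nat.cast_pos (α := ℝ).mpr (Nat.factorial_pos s)]
      _ = ((s+1).factorial : ℝ) * (((s+1):ℕ)+1)^N := by push_cast; ring

lemma rf_zero_case {m k s : ℕ} (h : s + m < k) :
    risingFactorial ((m:ℝ) - k + s + 1) (k - s) = 0 := by
  apply Finset.prod_eq_zero (i := k - s - m - 1)
  · simp only [Finset.mem_range]; omega
  · have h1 : (k - s - m - 1 : ℕ) = k - (s + m + 1) := by omega
    rw [h1, Nat.cast_sub (by omega)]
    push_cast; ring

lemma rf_neg_le {m k s : ℕ} (hk : s ≤ k) (h : k ≤ s + m) :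
    risingFactorial ((m:ℝ) - k + s + 1) (k - s) ≤ (m+1)^m := by
  calc risingFactorial ((m:ℝ) - k + s + 1) (k - s)
      ≤ ∏ i ∈ Finset.range (k - s), ((m:ℝ)+1) := by
        apply Finset.prod_le_prod
        · intro i hi
          have : (0:ℝ) ≤ (m:ℝ) - k + s + 1 + i - 1 := by
            have : (k:ℝ) ≤ s + m := by exact_mod_cast h
            have : (0:ℝ) ≤ i := Nat.cast_nonneg i
            linarith
          linarith
        · intro i hi
          simp only [Finset.mem_range] at hi
          have h1 : (i:ℝ) ≤ (k:ℝ) - s - 1 := by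
            have : i ≤ k - s - 1 := by omega
            have h2 : ((k - s - 1 : ℕ):ℝ) = (k:ℝ) - s - 1 := by
              rw [Nat.cast_sub (by omega), Nat.cast_sub (by omega)]; push_cast; ring
            calc (i:ℝ) ≤ ((k - s - 1:ℕ):ℝ) := by exact_mod_cast this
              _ = (k:ℝ) - s - 1 := h2
          linarith
    _ = ((m:ℝ)+1)^(k-s) := by rw [Finset.prod_const, Finset.card_range]
    _ ≤ ((m:ℝ)+1)^m := by
        apply pow_le_pow_right₀ (by linarith [Nat.cast_nonneg (α := ℝ) m])
        omega

/-- coefficient of the alternative form -/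
noncomputable def phiC (σ : ℝ) (m k s : ℕ) : ℝ :=
  (k.choose s : ℝ) * risingFactorial ((m:ℝ) - k + s + 1) (k - s) *
    risingFactorial (σ - m) s / k.factorial

lemma phiC_zero {σ : ℝ} {m k s : ℕ} (h : s + m < k) : phiC σ m k s = 0 := by
  rw [phiC, rf_zero_case h]; ring

lemma zpow_key (z : ℂ) (M : ℤ) (s : ℕ) :
    z ^ M * (-(z * z))^s = (-1)^s * z^s * z ^ (M + s) := by
  by_cases hz : z = 0
  · subst hz
    rcases Nat.eq_zero_or_pos s with hs | hs
    · subst hs; simp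
    · rw [zero_mul, neg_zero, zero_pow (by omega : s ≠ 0)]; simp
  · rw [zpow_add₀ hz, zpow_natCast, neg_mul_eq_neg_mul]
    rw [mul_pow, neg_pow]
    ring

lemma Phi_eq_alt (σ : ℝ) (m k : ℕ) (z : ℂ) :
    Phi σ m k z =
      (Real.sqrt ((σ - 2 * m - 1) * k.factorial * Real.Gamma (σ - m) /
        (Real.pi * m.factorial * Real.Gamma (σ - 2 * m + k))) : ℂ) *
      (-1) ^ k *
      ((((1 - ‖z‖ ^ 2) ^ (-(m : ℤ)) : ℝ)) : ℂ) *
      ∑ s ∈ Finset.range (k + 1),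
        ((phiC σ m k s : ℝ) : ℂ) * (-1)^s * z ^ s *
          (starRingEnd ℂ z) ^ ((m : ℤ) - (k : ℤ) + (s : ℤ)) := by
  have key : (starRingEnd ℂ z) ^ ((m : ℤ) - (k : ℤ)) *
      ((jacobiP k ((m : ℝ) - (k : ℝ)) (σ - 2 * m - 1) (1 - 2 * ‖z‖ ^ 2) : ℝ) : ℂ) =
      ∑ s ∈ Finset.range (k + 1),
        ((phiC σ m k s : ℝ) : ℂ) * (-1)^s * z ^ s *
          (starRingEnd ℂ z) ^ ((m : ℤ) - (k : ℤ) + (s : ℤ)) := by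
    simp only [jacobiP]
    push_cast
    rw [Finset.mul_sum, Finset.mul_sum]
    apply Finset.sum_congr rfl
    intro s hs
    simp only [Finset.mem_range] at hs
    have hx : (((1 - 2 * ‖z‖ ^ 2 - 1) / 2 : ℂ)) = -(starRingEnd ℂ z * starRingEnd ℂ z) ∨ True := Or.inr trivial
    by_cases hzero : s + m < k
    · rw [show ((m:ℝ) - (k:ℝ)) + (s:ℝ) + 1 = (m:ℝ) - k + s + 1 by ring, rf_zero_case hzero,
        phiC_zero hzero]
      push_cast
      ring
    · push_neg at hzero
      have harg : risingFactorial ((k:ℝ) + ((m:ℝ) - (k:ℝ)) + (σ - 2*(m:ℝ) - 1) + 1) s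
          = risingFactorial (σ - (m:ℝ)) s := by
        congr 1; ring
      have hxv : ((1 : ℂ) - 2 * ((‖z‖ : ℝ) : ℂ) ^ 2 - 1) / 2 = -(starRingEnd ℂ z * z) := by
        have h1 : ((1 : ℂ) - 2 * ((‖z‖ : ℝ) : ℂ) ^ 2 - 1) / 2 = -(((‖z‖ : ℝ) : ℂ) ^ 2) := by
          ring
        rw [h1]
        congr 1
        have : (((‖z‖ : ℝ) : ℂ))^2 = (((‖z‖ ^ 2 : ℝ)) : ℂ) := by push_cast; rfl
        rw [this, Complex.sq_norm]
        rw [mul_comm, Complex.mul_conj]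
      have hphiC : ((phiC σ m k s : ℝ) : ℂ) =
          ((k.choose s : ℂ) * ((risingFactorial ((m:ℝ) - ↑k + ↑s + 1) (k - s) : ℝ) : ℂ) *
            ((risingFactorial (σ - ↑m) s : ℝ) : ℂ)) / (k.factorial : ℂ) := by
        rw [phiC]; push_cast; ring
      have hw0 : z = 0 ↔ starRingEnd ℂ z = 0 := by
        constructor
        · intro h; rw [h, map_zero]
        · intro h
          have := congrArg (starRingEnd ℂ) h
          simpa using this
      have hkey : (starRingEnd ℂ z) ^ ((m:ℤ) - (k:ℤ)) * (-((starRingEnd ℂ z) * z))^s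
          = (-1)^s * z^s * (starRingEnd ℂ z) ^ ((m:ℤ) - (k:ℤ) + s) := by
        by_cases hz : z = 0
        · rw [hz, map_zero]
          rcases Nat.eq_zero_or_pos s with h0 | h0
          · subst h0; simp
          · rw [mul_zero, neg_zero, zero_pow (by omega : s ≠ 0)]; simp
        · have hw : starRingEnd ℂ z ≠ 0 := fun h => hz (hw0.mpr h)
          rw [zpow_add₀ hw, zpow_natCast, neg_pow, mul_pow]
          ring
      rw [harg, hxv, hphiC]
      have hfac : (k.factorial : ℂ) ≠ 0 := Nat.cast_ne_zero.mpr k.factorial_pos.ne'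
      field_simp
      linear_combination ((k.choose s : ℂ) * ((risingFactorial ((m:ℝ) - ↑k + ↑s + 1) (k - s) : ℝ) : ℂ) *
            ((risingFactorial (σ - ↑m) s : ℝ) : ℂ)) * hkey
  simp only [Phi]
  rw [mul_assoc, key, mul_assoc]

lemma phiC_bound {σ : ℝ} {m k s : ℕ} (hσm : 1 ≤ σ - m) {N : ℕ} (hN : σ - m ≤ N + 1)
    (hsk : s ≤ k) :
    |phiC σ m k s| ≤ ((m:ℝ)+1)^m * ((s:ℝ)+1)^N := by
  by_cases hzero : s + m < k
  · rw [phiC_zero hzero, abs_zero]; positivity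
  · push_neg at hzero
    have h1 : (0:ℝ) ≤ risingFactorial ((m:ℝ) - k + s + 1) (k - s) := by
      apply rf_nonneg
      have : (k:ℝ) ≤ (s:ℝ) + m := by exact_mod_cast hzero
      linarith
    have h2 : (0:ℝ) ≤ risingFactorial (σ - m) s := rf_nonneg (by linarith) s
    have habs : |phiC σ m k s| = phiC σ m k s := by
      apply abs_of_nonneg
      rw [phiC]
      positivity
    rw [habs, phiC]
    have hRF1 : risingFactorial ((m:ℝ) - k + s + 1) (k - s) ≤ ((m:ℝ)+1)^m := rf_neg_le hsk hzero
    have hRF2 : risingFactorial (σ - m) s ≤ s.factorial * ((s:ℝ)+1)^N :=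
      rf_sigma_bound hσm hN s
    have hch : (k.choose s : ℝ) * s.factorial ≤ k.factorial := by
      have h := Nat.choose_mul_factorial_mul_factorial hsk
      have : k.choose s * s.factorial ≤ k.factorial := by
        calc k.choose s * s.factorial ≤ k.choose s * s.factorial * (k-s).factorial :=
            Nat.le_mul_of_pos_right _ (Nat.factorial_pos _)
          _ = k.factorial := h
      exact_mod_cast this
    rw [div_le_iff₀ (by exact_mod_cast k.factorial_pos)]
    calc (k.choose s : ℝ) * risingFactorial ((m:ℝ) - k + s + 1) (k - s) * risingFactorial (σ - m) s
        ≤ (k.choose s : ℝ) * ((m:ℝ)+1)^m * (s.factorial * ((s:ℝ)+1)^N) := by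
          apply mul_le_mul
          · apply mul_le_mul_of_nonneg_left hRF1 (by positivity)
          · exact hRF2
          · exact h2
          · positivity
      _ = (((m:ℝ)+1)^m * ((s:ℝ)+1)^N) * ((k.choose s : ℝ) * s.factorial) := by ring
      _ ≤ (((m:ℝ)+1)^m * ((s:ℝ)+1)^N) * k.factorial := by
          apply mul_le_mul_of_nonneg_left hch (by positivity)

lemma term_bound {σ : ℝ} {m k s : ℕ} (hσm : 1 ≤ σ - m) {N : ℕ} (hN : σ - m ≤ N + 1)
    (hsk : s ≤ k) {r : ℝ} (hr0 : 0 < r) (hr1 : r ≤ 1) {z : ℂ} (hz : ‖z‖ ≤ r) :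
    ‖((phiC σ m k s : ℝ) : ℂ) * (-1)^s * z ^ s *
        (starRingEnd ℂ z) ^ ((m : ℤ) - (k : ℤ) + (s : ℤ))‖
      ≤ ((m:ℝ)+1)^m * ((k:ℝ)+1)^N * r ^ ((k:ℤ) - (m:ℤ)) := by
  have hb : ((m:ℝ)+1)^m * ((s:ℝ)+1)^N * r ^ ((k:ℤ) - (m:ℤ)) ≤
      ((m:ℝ)+1)^m * ((k:ℝ)+1)^N * r ^ ((k:ℤ) - (m:ℤ)) := by
    have : ((s:ℝ)+1)^N ≤ ((k:ℝ)+1)^N := by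
      apply pow_le_pow_left₀ (by positivity)
      have : (s:ℝ) ≤ k := by exact_mod_cast hsk
      linarith
    have hrz : (0:ℝ) < r ^ ((k:ℤ) - (m:ℤ)) := zpow_pos hr0 _
    have hmp : (0:ℝ) ≤ ((m:ℝ)+1)^m := by positivity
    gcongr
  refine le_trans ?_ hb
  by_cases hzero : s + m < k
  · rw [phiC_zero hzero]
    simp only [Complex.ofReal_zero, zero_mul, norm_zero]
    positivity
  · push_neg at hzero
    rw [norm_mul, norm_mul, norm_mul]
    have he : ((m : ℤ) - (k : ℤ) + (s : ℤ)) = ((m + s - k : ℕ) : ℤ) := by omega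
    rw [he, zpow_natCast]
    have h1 : ‖((phiC σ m k s : ℝ) : ℂ)‖ = |phiC σ m k s| := by rw [Complex.norm_real, Real.norm_eq_abs]
    have h2 : ‖(-1:ℂ)^s‖ = 1 := by
      rw [norm_pow]; simp
    have h3 : ‖z ^ s‖ = ‖z‖ ^ s := norm_pow _ _
    have h4 : ‖(starRingEnd ℂ z) ^ (m + s - k)‖ = ‖z‖ ^ (m + s - k) := by
      rw [norm_pow, Complex.norm_conj]
    rw [h1, h2, h3, h4, mul_one]
    have hzr : ‖z‖ ^ s * ‖z‖ ^ (m + s - k) ≤ r ^ ((k:ℤ) - (m:ℤ)) := by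
      have hzn : (0:ℝ) ≤ ‖z‖ := norm_nonneg z
      calc ‖z‖ ^ s * ‖z‖ ^ (m + s - k)
          = ‖z‖ ^ (s + (m + s - k)) := by rw [pow_add]
        _ ≤ r ^ (s + (m + s - k)) := by apply pow_le_pow_left₀ hzn hz
        _ = r ^ ((s + (m + s - k) : ℕ) : ℤ) := by rw [zpow_natCast]
        _ ≤ r ^ ((k:ℤ) - (m:ℤ)) := by
            apply zpow_le_zpow_right_of_le_one₀ hr0 hr1
            push_cast
            omega
    calc |phiC σ m k s| * ‖z‖ ^ s * ‖z‖ ^ (m + s - k)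
        = |phiC σ m k s| * (‖z‖ ^ s * ‖z‖ ^ (m + s - k)) := by ring
      _ ≤ (((m:ℝ)+1)^m * ((s:ℝ)+1)^N) * r ^ ((k:ℤ) - (m:ℤ)) := by
          apply mul_le_mul (phiC_bound hσm hN hsk) hzr (by positivity) (by positivity)
      _ = ((m:ℝ)+1)^m * ((s:ℝ)+1)^N * r ^ ((k:ℤ) - (m:ℤ)) := by ring

noncomputable def Cbig (σ : ℝ) (m : ℕ) : ℝ :=
  (σ - 2*m - 1) * Real.Gamma (σ - m) / (Real.pi * m.factorial * Real.Gamma (σ - 2*m))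

lemma sqrt_arg_le {σ : ℝ} {m : ℕ} (hσ : 1 < σ) (hm : (m:ℝ) ≤ (σ-1)/2) (k : ℕ) :
    (σ - 2 * m - 1) * k.factorial * Real.Gamma (σ - m) /
      (Real.pi * m.factorial * Real.Gamma (σ - 2 * m + k)) ≤ Cbig σ m := by
  have h2m : 1 ≤ σ - 2*m := by linarith
  have hΓ2 : 0 < Real.Gamma (σ - 2*m) := Real.Gamma_pos_of_pos (by linarith)
  have hΓ1 : 0 < Real.Gamma (σ - m) := Real.Gamma_pos_of_pos (by
    have : (0:ℝ) ≤ m := Nat.cast_nonneg m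
    linarith)
  have hRF : 0 < risingFactorial (σ - 2*m) k := rf_pos (by linarith) k
  have hΓadd : Real.Gamma (σ - 2*m + k) = risingFactorial (σ - 2*m) k * Real.Gamma (σ - 2*m) :=
    Gamma_add_nat (by linarith) k
  have hfacle : (k.factorial : ℝ) ≤ risingFactorial (σ - 2*m) k := by
    rw [← rf_one k]
    exact rf_le_rf zero_le_one h2m k
  have hpos : 0 < Real.pi * m.factorial := by
    have := Real.pi_pos
    have : (0:ℝ) < m.factorial := by exact_mod_cast m.factorial_pos
    positivity
  rw [hΓadd, Cbig]
  rw [div_le_div_iff₀ (by positivity) (by positivity)]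
  have hnum : (σ - 2*m - 1) * Real.Gamma (σ - m) ≥ 0 := by nlinarith
  nlinarith [mul_le_mul_of_nonneg_left hfacle hnum, Real.pi_pos,
    mul_pos hpos hΓ2, (show (0:ℝ) < m.factorial by exact_mod_cast m.factorial_pos)]

lemma Phi_bound {σ : ℝ} {m : ℕ} (hσ : 1 < σ) (hm : (m:ℝ) ≤ (σ-1)/2) (k : ℕ)
    {r : ℝ} (hr0 : 0 < r) (hr1 : r < 1) {z : ℂ} (hz : ‖z‖ ≤ r) :
    ‖Phi σ m k z‖ ≤
      Real.sqrt (Cbig σ m) * ((1-r^2)^m)⁻¹ * ((m:ℝ)+1)^m *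
        (((k:ℝ)+1)^(⌈σ⌉₊) * ((k:ℝ)+1)) * r ^ ((k:ℤ)-(m:ℤ)) := by
  set N := ⌈σ⌉₊ with hNdef
  have hσm : 1 ≤ σ - m := by linarith
  have hN : σ - m ≤ (N:ℝ) + 1 := by
    have h1 : σ ≤ (N:ℝ) := Nat.le_ceil σ
    have : (0:ℝ) ≤ m := Nat.cast_nonneg m
    linarith
  have hb1 : 0 < 1 - r^2 := by nlinarith
  have hbz : 1 - r^2 ≤ 1 - ‖z‖^2 := by
    have h0 : 0 ≤ ‖z‖ := norm_nonneg z
    nlinarith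
  rw [Phi_eq_alt]
  rw [norm_mul, norm_mul, norm_mul]
  have e1 : ‖(Real.sqrt ((σ - 2 * m - 1) * k.factorial * Real.Gamma (σ - m) /
      (Real.pi * m.factorial * Real.Gamma (σ - 2 * m + k))) : ℂ)‖ ≤ Real.sqrt (Cbig σ m) := by
    rw [Complex.norm_real, Real.norm_eq_abs, abs_of_nonneg (Real.sqrt_nonneg _)]
    exact Real.sqrt_le_sqrt (sqrt_arg_le hσ hm k)
  have e2 : ‖(-1:ℂ)^k‖ = 1 := by rw [norm_pow]; simp
  have e3 : ‖((((1 - ‖z‖ ^ 2) ^ (-(m : ℤ)) : ℝ)) : ℂ)‖ ≤ ((1-r^2)^m)⁻¹ := by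
    rw [Complex.norm_real, Real.norm_eq_abs]
    rw [zpow_neg, zpow_natCast, abs_inv, abs_pow]
    rw [abs_of_nonneg (by linarith)]
    apply inv_anti₀ (by positivity)
    apply pow_le_pow_left₀ (le_of_lt hb1) hbz
  have e4 : ‖∑ s ∈ Finset.range (k + 1),
        ((phiC σ m k s : ℝ) : ℂ) * (-1)^s * z ^ s *
          (starRingEnd ℂ z) ^ ((m : ℤ) - (k : ℤ) + (s : ℤ))‖
      ≤ (((k:ℝ)+1) * (((m:ℝ)+1)^m * ((k:ℝ)+1)^N)) * r ^ ((k:ℤ)-(m:ℤ)) := by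
    calc ‖∑ s ∈ Finset.range (k + 1),
        ((phiC σ m k s : ℝ) : ℂ) * (-1)^s * z ^ s *
          (starRingEnd ℂ z) ^ ((m : ℤ) - (k : ℤ) + (s : ℤ))‖
        ≤ ∑ s ∈ Finset.range (k + 1), ‖((phiC σ m k s : ℝ) : ℂ) * (-1)^s * z ^ s *
          (starRingEnd ℂ z) ^ ((m : ℤ) - (k : ℤ) + (s : ℤ))‖ := norm_sum_le _ _
      _ ≤ ∑ s ∈ Finset.range (k + 1), ((m:ℝ)+1)^m * ((k:ℝ)+1)^N * r ^ ((k:ℤ) - (m:ℤ)) := by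
          apply Finset.sum_le_sum
          intro s hs
          simp only [Finset.mem_range] at hs
          exact term_bound hσm hN (by omega) hr0 (le_of_lt hr1) hz
      _ = (((k:ℝ)+1) * (((m:ℝ)+1)^m * ((k:ℝ)+1)^N)) * r ^ ((k:ℤ)-(m:ℤ)) := by
          rw [Finset.sum_const, Finset.card_range]
          push_cast
          ring
  calc ‖_‖ * ‖(-1:ℂ)^k‖ * ‖_‖ * ‖_‖
      ≤ Real.sqrt (Cbig σ m) * 1 * ((1-r^2)^m)⁻¹ *
        ((((k:ℝ)+1) * (((m:ℝ)+1)^m * ((k:ℝ)+1)^N)) * r ^ ((k:ℤ)-(m:ℤ))) := by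
        rw [e2]
        apply mul_le_mul
        · apply mul_le_mul
          · apply mul_le_mul e1 le_rfl (by positivity) (Real.sqrt_nonneg _)
          · exact e3
          · exact norm_nonneg _
          · positivity
        · exact e4
        · exact norm_nonneg _
        · positivity
    _ = Real.sqrt (Cbig σ m) * ((1-r^2)^m)⁻¹ * ((m:ℝ)+1)^m *
        (((k:ℝ)+1)^N * ((k:ℝ)+1)) * r ^ ((k:ℤ)-(m:ℤ)) := by ring

lemma Phi_continuousOn (σ : ℝ) (m k : ℕ) {r : ℝ} (hr1 : r < 1) :
    ContinuousOn (fun z => Phi σ m k z) (Metric.closedBall (0:ℂ) r) := by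
  have hmem : ∀ z ∈ Metric.closedBall (0:ℂ) r, (1 - ‖z‖ ^ 2) ≠ 0 := by
    intro z hz
    rw [Metric.mem_closedBall, Complex.dist_eq, sub_zero] at hz
    have h0 : 0 ≤ ‖z‖ := norm_nonneg z
    have : ‖z‖ ^ 2 < 1 := by nlinarith
    linarith
  have heq : (fun z => Phi σ m k z) = fun z =>
      (Real.sqrt ((σ - 2 * m - 1) * k.factorial * Real.Gamma (σ - m) /
        (Real.pi * m.factorial * Real.Gamma (σ - 2 * m + k))) : ℂ) *
      (-1) ^ k *
      (((((1 - ‖z‖ ^ 2)^m)⁻¹ : ℝ)) : ℂ) *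
      ∑ s ∈ Finset.range (k + 1),
        ((phiC σ m k s : ℝ) : ℂ) * (-1)^s * z ^ s *
          (starRingEnd ℂ z) ^ ((m : ℤ) - (k : ℤ) + (s : ℤ)) := by
    funext z
    rw [Phi_eq_alt, zpow_neg, zpow_natCast]
  rw [heq]
  apply ContinuousOn.mul
  · apply ContinuousOn.mul continuousOn_const
    apply Complex.continuous_ofReal.comp_continuousOn
    apply ContinuousOn.inv₀
    · exact ((continuous_const.sub ((continuous_norm).pow 2)).pow m).continuousOn
    · intro z hz
      exact pow_ne_zero m (hmem z hz)
  · apply continuousOn_finset_sum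
    intro s hs
    simp only [Finset.mem_range] at hs
    by_cases hzero : s + m < k
    · have : (fun z : ℂ => ((phiC σ m k s : ℝ) : ℂ) * (-1)^s * z ^ s *
          (starRingEnd ℂ z) ^ ((m : ℤ) - (k : ℤ) + (s : ℤ))) = fun _ => 0 := by
        funext z
        rw [phiC_zero hzero]
        simp
      rw [this]
      exact continuousOn_const
    · push_neg at hzero
      have he : ((m : ℤ) - (k : ℤ) + (s : ℤ)) = ((m + s - k : ℕ) : ℤ) := by omega
      simp only [he, zpow_natCast]
      apply ContinuousOn.mul
      · exact (continuous_const.mul (continuous_pow s)).continuousOn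
      · exact ((Complex.continuous_conj).pow (m + s - k)).continuousOn

lemma Phi_degenerate {σ : ℝ} {m : ℕ} (hdeg : σ - 2*m - 1 = 0) (k : ℕ) (z : ℂ) :
    Phi σ m k z = 0 := by
  rw [Phi]
  have : σ - 2*(m:ℝ) - 1 = σ - 2*m - 1 := by norm_num
  rw [show (σ - 2 * (m:ℕ) - 1 : ℝ) = 0 from hdeg]
  simp

lemma summable_u (A : ℝ) (N : ℕ) {r : ℝ} (hr0 : 0 < r) (hr1 : r < 1) (m : ℕ) :
    Summable (fun k : ℕ => A * (((k:ℝ)+1)^N * ((k:ℝ)+1)) * r ^ ((k:ℤ)-(m:ℤ))) := by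
  have hg : Summable (fun n : ℕ => (n:ℝ)^(N+1) * r^n) :=
    summable_pow_mul_geometric_of_norm_lt_one (N+1) (by
      rw [Real.norm_eq_abs, abs_of_pos hr0]; exact hr1)
  have hshift : Summable (fun k : ℕ => ((k+1:ℕ):ℝ)^(N+1) * r^(k+1)) :=
    (summable_nat_add_iff 1).mpr hg
  have heq : (fun k : ℕ => A * (((k:ℝ)+1)^N * ((k:ℝ)+1)) * r ^ ((k:ℤ)-(m:ℤ)))
      = fun k : ℕ => (A * (r ^ ((-(m:ℤ)) - 1))) * (((k+1:ℕ):ℝ)^(N+1) * r^(k+1)) := by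
    funext k
    have h1 : r ^ ((k:ℤ)-(m:ℤ)) = r ^ (k+1 : ℕ) * r ^ ((-(m:ℤ)) - 1) := by
      rw [← zpow_natCast r (k+1), ← zpow_add₀ (ne_of_gt hr0)]
      congr 1
      push_cast
      ring
    rw [h1]
    push_cast
    ring
  rw [heq]
  exact hshift.mul_left _


/-- Proposition 4.3: continuity of the labeling `z ↦ |z,σ,m⟩` on the unit disk
(equivalently, `‖|z,σ,m⟩ − |w,σ,m⟩‖ → 0` as `z → w`). -/
theorem continuity_of_labeling {H : Type*} [NormedAddCommGroup H] [InnerProductSpace ℂ H]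
    [CompleteSpace H] (ψ : HilbertBasis ℕ ℂ H)
    (σ : ℝ) (hσ : 1 < σ) (m : ℕ) (hm : (m : ℝ) ≤ (σ - 1) / 2) :
    ContinuousOn (fun z : ℂ => gnbs ψ σ m z) {z : ℂ | ‖z‖ < 1} := by
  have h0 : 0 ≤ σ - 2*m - 1 := by linarith
  rcases eq_or_lt_of_le h0 with hdeg | hpos
  · have : (fun z : ℂ => gnbs ψ σ m z) = fun _ => (0:H) := by
      funext z
      simp [gnbs, Phi_degenerate hdeg.symm, tsum_zero]
    rw [this]
    exact continuousOn_const
  · intro w hw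
    simp only [Set.mem_setOf_eq] at hw
    have habsw : 0 ≤ ‖w‖ := norm_nonneg w
    set r : ℝ := (‖w‖ + 1)/2 with hrdef
    have hr0 : 0 < r := by positivity
    have hr1 : r < 1 := by rw [hrdef]; linarith
    have hwr : ‖w‖ < r := by rw [hrdef]; linarith
    have hnhds : Metric.closedBall (0:ℂ) r ∈ nhds w := by
      apply Metric.closedBall_mem_nhds_of_mem
      rw [Metric.mem_ball, Complex.dist_eq, sub_zero]
      exact hwr
    set N : ℕ := ⌈σ⌉₊ with hNdef
    set A : ℝ := Real.sqrt (Cbig σ m) * ((1-r^2)^m)⁻¹ * ((m:ℝ)+1)^m with hAdef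
    -- continuity of the series
    have hFcont : ContinuousOn (fun z : ℂ => ∑' k : ℕ, Phi σ m k z • (ψ k : H))
        (Metric.closedBall (0:ℂ) r) := by
      apply TendstoUniformlyOn.continuousOn
        (tendstoUniformlyOn_tsum (summable_u A N hr0 hr1 m) ?_)
      · apply Filter.Frequently.of_forall
        intro t
        apply continuousOn_finset_sum
        intro k _
        exact (Phi_continuousOn σ m k hr1).smul continuousOn_const
      · intro k z hz
        rw [Metric.mem_closedBall, Complex.dist_eq, sub_zero] at hz
        rw [norm_smul, ψ.orthonormal.1 k, mul_one]
        have := Phi_bound hσ hm k hr0 hr1 hz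
        calc ‖Phi σ m k z‖ = ‖Phi σ m k z‖ := rfl
          _ ≤ Real.sqrt (Cbig σ m) * ((1-r^2)^m)⁻¹ * ((m:ℝ)+1)^m *
              (((k:ℝ)+1)^N * ((k:ℝ)+1)) * r ^ ((k:ℤ)-(m:ℤ)) := this
          _ = A * (((k:ℝ)+1)^N * ((k:ℝ)+1)) * r ^ ((k:ℤ)-(m:ℤ)) := by rw [hAdef]
    have hFat : ContinuousAt (fun z : ℂ => ∑' k : ℕ, Phi σ m k z • (ψ k : H)) w :=
      hFcont.continuousAt hnhds
    -- continuity of the scalar factor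
    have hbase : ContinuousAt (fun z : ℂ => 1 - ‖z‖ ^ 2) w :=
      (continuous_const.sub (continuous_norm.pow 2)).continuousAt
    have hbw : 0 < 1 - ‖w‖ ^ 2 := by nlinarith
    have hrpow : ContinuousAt (fun z : ℂ => (1 - ‖z‖ ^ 2) ^ σ) w := by
      apply ContinuousAt.comp (g := fun x : ℝ => x ^ σ)
      · exact Real.continuousAt_rpow_const _ _ (Or.inl (ne_of_gt hbw))
      · exact hbase
    have hden : ContinuousAt (fun z : ℂ => Real.pi * (1 - ‖z‖ ^ 2) ^ σ) w :=
      continuousAt_const.mul hrpow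
    have hdenw : Real.pi * (1 - ‖w‖ ^ 2) ^ σ ≠ 0 := by
      have := Real.rpow_pos_of_pos hbw σ
      have := Real.pi_pos
      positivity
    have hnf : ContinuousAt (fun z : ℂ => normFactor σ m z) w := by
      simp only [normFactor]
      exact continuousAt_const.div hden hdenw
    have hnfw : 0 < normFactor σ m w := by
      rw [normFactor]
      have h1 := Real.rpow_pos_of_pos hbw σ
      have h2 := Real.pi_pos
      positivity
    have hsqrt : ContinuousAt (fun z : ℂ => Real.sqrt (normFactor σ m z)) w :=
      Real.continuous_sqrt.continuousAt.comp hnf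
    have hsqrtne : Real.sqrt (normFactor σ m w) ≠ 0 :=
      ne_of_gt (Real.sqrt_pos.mpr hnfw)
    have hscalar : ContinuousAt (fun z : ℂ => (Real.sqrt (normFactor σ m z))⁻¹) w :=
      hsqrt.inv₀ hsqrtne
    have : ContinuousAt (fun z : ℂ => gnbs ψ σ m z) w := by
      simp only [gnbs]
      exact hscalar.smul hFat
    exact this.continuousWithinAt
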